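/- Let λ = (λ₀, λ₁) be a binary loss function that is proper and η-mixable for some η > 0, with λ₀ and λ₁ continuous on [0,1] (as maps into [0,∞]). Then for every λ-superprediction (a, b) and every p ∈ (0,1), one has (1−p)·e^{−η(a−λ₀(p))} + p·e^{−η(b−λ₁(p))} ≤ 1; equivalently, the point (ηa − ln(1−p) − ηλ₀(p), ηb − ln p − ηλ₁(p)) is a superprediction for the log loss function. -/

import Mathlib

open Set

/-- `e^{-c}` for `c ∈ [0,∞]`, with the convention `e^{-∞} = 0`. -/
noncomputable def expNeg (c : ENNReal) : ℝ :=
  if c = ⊤ then 0 else Real.exp (-c.toReal)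

/-- `(l0, l1)` is a binary loss function: `l0 0 = 0`, `l1 1 = 0`, `l0` is increasing,
`l1` is decreasing, and both are finite on `(0,1)`. -/
structure IsLossFunction (l0 l1 : ℝ → ENNReal) : Prop where
  zero0 : l0 0 = 0
  zero1 : l1 1 = 0
  mono0 : MonotoneOn l0 (Icc 0 1)
  anti1 : AntitoneOn l1 (Icc 0 1)
  finite0 : ∀ p ∈ Ioo (0:ℝ) 1, l0 p ≠ ⊤
  finite1 : ∀ p ∈ Ioo (0:ℝ) 1, l1 p ≠ ⊤

/-- `(l0, l1)` is proper: predicting `p` is optimal in expectation when the label has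
probability `p` of being `1`. -/
def IsProper (l0 l1 : ℝ → ENNReal) : Prop :=
  ∀ p ∈ Icc (0:ℝ) 1, ∀ q ∈ Icc (0:ℝ) 1,
    ENNReal.ofReal p * l1 p + ENNReal.ofReal (1 - p) * l0 p ≤
      ENNReal.ofReal p * l1 q + ENNReal.ofReal (1 - p) * l0 q

/-- `(l0, l1)` is `η`-mixable: the image of the superprediction set under
`(x, y) ↦ (e^{-ηx}, e^{-ηy})` is convex. -/
def IsMixable (l0 l1 : ℝ → ENNReal) (η : ℝ) : Prop :=
  Convex ℝ {x : ℝ × ℝ | x.1 ∈ Icc (0:ℝ) 1 ∧ x.2 ∈ Icc (0:ℝ) 1 ∧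
    ∃ p ∈ Icc (0:ℝ) 1,
      x.1 ≤ expNeg (ENNReal.ofReal η * l0 p) ∧ x.2 ≤ expNeg (ENNReal.ofReal η * l1 p)}

/-- `(a, b)` is a superprediction for the loss function `(l0, l1)`. -/
def IsSuperprediction (l0 l1 : ℝ → ENNReal) (a b : ENNReal) : Prop :=
  ∃ q ∈ Icc (0:ℝ) 1, l0 q ≤ a ∧ l1 q ≤ b

lemma expNeg_nonneg' (c : ENNReal) : 0 ≤ expNeg c := by
  unfold expNeg; split
  · exact le_refl 0
  · exact (Real.exp_pos _).le

lemma expNeg_le_one' (c : ENNReal) : expNeg c ≤ 1 := by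
  unfold expNeg; split
  · norm_num
  · calc Real.exp (-c.toReal) ≤ Real.exp 0 :=
        Real.exp_le_exp.mpr (by simpa using ENNReal.toReal_nonneg)
      _ = 1 := Real.exp_zero

lemma expNeg_anti' {c d : ENNReal} (h : c ≤ d) : expNeg d ≤ expNeg c := by
  unfold expNeg
  rcases eq_or_ne d ⊤ with hd | hd
  · rw [if_pos hd]
    split
    · exact le_refl 0
    · exact (Real.exp_pos _).le
  · have hc : c ≠ ⊤ := ne_top_of_le_ne_top hd h
    rw [if_neg hd, if_neg hc]
    exact Real.exp_le_exp.mpr (neg_le_neg ((ENNReal.toReal_le_toReal hc hd).mpr h))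

lemma log_one_add_lower {x : ℝ} (hx : -(1/2) ≤ x) : x - 2*x^2 ≤ Real.log (1+x) := by
  have h1 : (0:ℝ) < 1 + x := by linarith
  have h2 : Real.log (1+x)⁻¹ ≤ (1+x)⁻¹ - 1 :=
    Real.log_le_sub_one_of_pos (by positivity)
  rw [Real.log_inv] at h2
  have h3 : 1 - (1+x)⁻¹ ≤ Real.log (1+x) := by linarith
  have h4 : x - 2*x^2 ≤ 1 - (1+x)⁻¹ := by
    have he : 1 - (1+x)⁻¹ = x / (1+x) := by field_simp; ring
    rw [he, le_div_iff₀ h1]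
    nlinarith [sq_nonneg x, sq_nonneg (x*(1+2*x))]
  linarith

/-- If `(l0, l1)` is a proper `η`-mixable binary loss function, continuous on `[0,1]`,
then for every superprediction `(a, b)` and every `p ∈ (0,1)`,
`(1-p)·e^{-η(a - l0(p))} + p·e^{-η(b - l1(p))} ≤ 1`. -/
theorem log_superprediction_of_mixable (l0 l1 : ℝ → ENNReal) (η : ℝ) (hη : 0 < η)
    (hloss : IsLossFunction l0 l1) (hproper : IsProper l0 l1) (hmix : IsMixable l0 l1 η)
    (hcont0 : ContinuousOn l0 (Icc 0 1)) (hcont1 : ContinuousOn l1 (Icc 0 1))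
    (a b : ENNReal) (hab : IsSuperprediction l0 l1 a b)
    (p : ℝ) (hp : p ∈ Ioo (0:ℝ) 1) :
    (1 - p) * (expNeg (ENNReal.ofReal η * a) * Real.exp (η * (l0 p).toReal)) +
      p * (expNeg (ENNReal.ofReal η * b) * Real.exp (η * (l1 p).toReal)) ≤ 1 := by
  obtain ⟨q, hqI, hq0, hq1⟩ := hab
  obtain ⟨hp0, hp1⟩ := hp
  have hpI : p ∈ Icc (0:ℝ) 1 := ⟨hp0.le, hp1.le⟩
  have hl0p : l0 p ≠ ⊤ := hloss.finite0 p ⟨hp0, hp1⟩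
  have hl1p : l1 p ≠ ⊤ := hloss.finite1 p ⟨hp0, hp1⟩
  have hηne : ENNReal.ofReal η ≠ ⊤ := ENNReal.ofReal_ne_top
  have hηne0 : ENNReal.ofReal η ≠ 0 := by
    simp [ENNReal.ofReal_eq_zero, not_le, hη]
  set L0 : ℝ := (l0 p).toReal with hL0def
  set L1 : ℝ := (l1 p).toReal with hL1def
  set u : ℝ := expNeg (ENNReal.ofReal η * a) with hudef
  set v : ℝ := expNeg (ENNReal.ofReal η * b) with hvdef
  set u₀ : ℝ := Real.exp (-(η * L0)) with hu0def
  set v₀ : ℝ := Real.exp (-(η * L1)) with hv0def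
  have hu0pos : 0 < u₀ := Real.exp_pos _
  have hv0pos : 0 < v₀ := Real.exp_pos _
  have hunn : 0 ≤ u := expNeg_nonneg' _
  have hvnn : 0 ≤ v := expNeg_nonneg' _
  have hexp0 : expNeg (ENNReal.ofReal η * l0 p) = u₀ := by
    rw [expNeg, if_neg (ENNReal.mul_ne_top hηne hl0p), hu0def]
    congr 1
    rw [ENNReal.toReal_mul, ENNReal.toReal_ofReal hη.le]
  have hexp1 : expNeg (ENNReal.ofReal η * l1 p) = v₀ := by
    rw [expNeg, if_neg (ENNReal.mul_ne_top hηne hl1p), hv0def]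
    congr 1
    rw [ENNReal.toReal_mul, ENNReal.toReal_ofReal hη.le]
  -- membership of the two endpoints in the mixability set
  have hP0 : ((u₀, v₀) : ℝ × ℝ) ∈ {x : ℝ × ℝ | x.1 ∈ Icc (0:ℝ) 1 ∧ x.2 ∈ Icc (0:ℝ) 1 ∧
      ∃ r ∈ Icc (0:ℝ) 1,
        x.1 ≤ expNeg (ENNReal.ofReal η * l0 r) ∧ x.2 ≤ expNeg (ENNReal.ofReal η * l1 r)} := by
    refine ⟨⟨hu0pos.le, ?_⟩, ⟨hv0pos.le, ?_⟩, p, hpI, le_of_eq hexp0.symm, le_of_eq hexp1.symm⟩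
    · rw [← hexp0]; exact expNeg_le_one' _
    · rw [← hexp1]; exact expNeg_le_one' _
  have hP1 : ((u, v) : ℝ × ℝ) ∈ {x : ℝ × ℝ | x.1 ∈ Icc (0:ℝ) 1 ∧ x.2 ∈ Icc (0:ℝ) 1 ∧
      ∃ r ∈ Icc (0:ℝ) 1,
        x.1 ≤ expNeg (ENNReal.ofReal η * l0 r) ∧ x.2 ≤ expNeg (ENNReal.ofReal η * l1 r)} := by
    refine ⟨⟨hunn, expNeg_le_one' _⟩, ⟨hvnn, expNeg_le_one' _⟩, q, hqI, ?_, ?_⟩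
    · exact expNeg_anti' (mul_le_mul_right hq0 _)
    · exact expNeg_anti' (mul_le_mul_right hq1 _)
  -- key inequality along the segment
  have key : ∀ t : ℝ, 0 < t → t ≤ 1/2 →
      (1-p) * Real.log ((1-t)*u₀ + t*u) + p * Real.log ((1-t)*v₀ + t*v) ≤
        -((1-p)*(η*L0) + p*(η*L1)) := by
    intro t ht0 ht2
    have ht1 : (0:ℝ) ≤ 1 - t := by linarith
    have hPt := hmix hP0 hP1 ht1 ht0.le (by ring : (1-t) + t = 1)
    have heq : (1-t) • ((u₀, v₀) : ℝ × ℝ) + t • ((u, v) : ℝ × ℝ)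
        = (((1-t)*u₀ + t*u, (1-t)*v₀ + t*v) : ℝ × ℝ) := by
      simp [Prod.ext_iff, smul_eq_mul]
    rw [heq] at hPt
    obtain ⟨-, -, r, hrI, hr0, hr1⟩ := hPt
    have hutpos : 0 < (1-t)*u₀ + t*u := by
      have : 0 < (1-t)*u₀ := by nlinarith
      nlinarith
    have hvtpos : 0 < (1-t)*v₀ + t*v := by
      have : 0 < (1-t)*v₀ := by nlinarith
      nlinarith
    -- extract finiteness and log bounds
    have hfin0 : ENNReal.ofReal η * l0 r ≠ ⊤ := by
      intro h
      rw [expNeg, if_pos h] at hr0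
      exact absurd (lt_of_lt_of_le hutpos hr0) (lt_irrefl 0)
    have hfin1 : ENNReal.ofReal η * l1 r ≠ ⊤ := by
      intro h
      rw [expNeg, if_pos h] at hr1
      exact absurd (lt_of_lt_of_le hvtpos hr1) (lt_irrefl 0)
    have hl0r : l0 r ≠ ⊤ := by
      intro h; exact hfin0 (by rw [h, ENNReal.mul_top hηne0])
    have hl1r : l1 r ≠ ⊤ := by
      intro h; exact hfin1 (by rw [h, ENNReal.mul_top hηne0])
    rw [expNeg, if_neg hfin0] at hr0
    rw [expNeg, if_neg hfin1] at hr1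
    have hlog0 : Real.log ((1-t)*u₀ + t*u) ≤ -(η * (l0 r).toReal) := by
      have := Real.log_le_log hutpos hr0
      rwa [Real.log_exp, ENNReal.toReal_mul, ENNReal.toReal_ofReal hη.le] at this
    have hlog1 : Real.log ((1-t)*v₀ + t*v) ≤ -(η * (l1 r).toReal) := by
      have := Real.log_le_log hvtpos hr1
      rwa [Real.log_exp, ENNReal.toReal_mul, ENNReal.toReal_ofReal hη.le] at this
    -- properness in real form
    have hEN := hproper p hpI r hrI
    have hlhs_ne : ENNReal.ofReal p * l1 p + ENNReal.ofReal (1-p) * l0 p ≠ ⊤ :=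
      ENNReal.add_ne_top.mpr
        ⟨ENNReal.mul_ne_top ENNReal.ofReal_ne_top hl1p,
         ENNReal.mul_ne_top ENNReal.ofReal_ne_top hl0p⟩
    have hrhs_ne : ENNReal.ofReal p * l1 r + ENNReal.ofReal (1-p) * l0 r ≠ ⊤ :=
      ENNReal.add_ne_top.mpr
        ⟨ENNReal.mul_ne_top ENNReal.ofReal_ne_top hl1r,
         ENNReal.mul_ne_top ENNReal.ofReal_ne_top hl0r⟩
    have hreal := (ENNReal.toReal_le_toReal hlhs_ne hrhs_ne).mpr hEN
    rw [ENNReal.toReal_add (ENNReal.mul_ne_top ENNReal.ofReal_ne_top hl1p)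
          (ENNReal.mul_ne_top ENNReal.ofReal_ne_top hl0p),
        ENNReal.toReal_add (ENNReal.mul_ne_top ENNReal.ofReal_ne_top hl1r)
          (ENNReal.mul_ne_top ENNReal.ofReal_ne_top hl0r),
        ENNReal.toReal_mul, ENNReal.toReal_mul, ENNReal.toReal_mul, ENNReal.toReal_mul,
        ENNReal.toReal_ofReal hp0.le, ENNReal.toReal_ofReal (by linarith : (0:ℝ) ≤ 1-p)]
      at hreal
    -- combine
    have h1 : (1-p) * Real.log ((1-t)*u₀ + t*u) ≤ (1-p) * (-(η * (l0 r).toReal)) :=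
      mul_le_mul_of_nonneg_left hlog0 (by linarith)
    have h2 : p * Real.log ((1-t)*v₀ + t*v) ≤ p * (-(η * (l1 r).toReal)) :=
      mul_le_mul_of_nonneg_left hlog1 hp0.le
    nlinarith [mul_le_mul_of_nonneg_left hreal hη.le]
  -- translate to A, B form
  clear_value L0 L1 u v u₀ v₀
  clear hP0 hP1 hexp0 hexp1 hproper hmix hcont0 hcont1 hloss hq0 hq1
    hl0p hl1p hηne hηne0 hqI
  set A : ℝ := u/u₀ - 1 with hAdef
  clear hudef hvdef
  set B : ℝ := v/v₀ - 1 with hBdef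
  clear_value A B
  have hAu : u = u₀ * (1 + A) := by
    rw [hAdef]; field_simp; ring
  have hBv : v = v₀ * (1 + B) := by
    rw [hBdef]; field_simp; ring
  have hA1 : -1 ≤ A := by
    rw [hAdef]
    have h := div_nonneg hunn hu0pos.le
    linarith
  have hB1 : -1 ≤ B := by
    rw [hBdef]
    have h := div_nonneg hvnn hv0pos.le
    linarith
  clear hAdef hBdef
  have key2 : ∀ t : ℝ, 0 < t → t ≤ 1/2 →
      (1-p) * Real.log (1 + t*A) + p * Real.log (1 + t*B) ≤ 0 := by
    intro t ht0 ht2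
    have hKey := key t ht0 ht2
    have hmA := mul_le_mul_of_nonneg_left hA1 ht0.le
    have hmB := mul_le_mul_of_nonneg_left hB1 ht0.le
    have hAt : 0 < 1 + t*A := by linarith
    have hBt : 0 < 1 + t*B := by linarith
    have hu' : (1-t)*u₀ + t*u = u₀ * (1 + t*A) := by rw [hAu]; ring
    have hv' : (1-t)*v₀ + t*v = v₀ * (1 + t*B) := by rw [hBv]; ring
    rw [hu', hv', Real.log_mul hu0pos.ne' hAt.ne', Real.log_mul hv0pos.ne' hBt.ne',
        hu0def, hv0def, Real.log_exp, Real.log_exp] at hKey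
    linarith
  -- deduce (1-p)A + pB ≤ 0
  set D : ℝ := (1-p)*A + p*B with hDdef
  set C : ℝ := (1-p)*A^2 + p*B^2 with hCdef
  clear_value D C
  have hC : 0 ≤ C := by nlinarith [sq_nonneg A, sq_nonneg B]
  have hDle : ∀ t : ℝ, 0 < t → t ≤ 1/2 → D ≤ 2*t*C := by
    intro t ht0 ht2
    have h := key2 t ht0 ht2
    have hmA := mul_le_mul_of_nonneg_left hA1 ht0.le
    have hmB := mul_le_mul_of_nonneg_left hB1 ht0.le
    have hAlb : t*A - 2*(t*A)^2 ≤ Real.log (1 + t*A) :=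
      log_one_add_lower (by linarith)
    have hBlb : t*B - 2*(t*B)^2 ≤ Real.log (1 + t*B) :=
      log_one_add_lower (by linarith)
    have h1 : (1-p) * (t*A - 2*(t*A)^2) ≤ (1-p) * Real.log (1 + t*A) :=
      mul_le_mul_of_nonneg_left hAlb (by linarith)
    have h2 : p * (t*B - 2*(t*B)^2) ≤ p * Real.log (1 + t*B) :=
      mul_le_mul_of_nonneg_left hBlb hp0.le
    have hexpand : t*D - 2*t^2*C
        = (1-p)*(t*A - 2*(t*A)^2) + p*(t*B - 2*(t*B)^2) := by
      rw [hDdef, hCdef]; ring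
    have hsum : t*D - 2*t^2*C ≤ 0 := by
      rw [hexpand]; linarith
    have hts : t*(2*t*C) = 2*t^2*C := by ring
    have ht' : t*D ≤ t*(2*t*C) := by linarith
    exact le_of_mul_le_mul_left ht' ht0
  have hD : D ≤ 0 := by
    clear key key2 hAu hBv hA1 hB1
    by_contra hD'
    push_neg at hD'
    set d : ℝ := D / (4*(C+1)) with hddef
    have hdpos : 0 < d := div_pos hD' (by linarith)
    have hdD : d * (4*(C+1)) = D := by
      rw [hddef]; field_simp
    set t : ℝ := min (1/2) d with htdef
    have ht0 : 0 < t := lt_min (by norm_num) hdpos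
    have ht2 : t ≤ 1/2 := min_le_left _ _
    have htd : t ≤ d := min_le_right _ _
    have h := hDle t ht0 ht2
    clear hDle
    clear_value t d
    have h2 : (2*C)*t ≤ (2*C)*d :=
      mul_le_mul_of_nonneg_left htd (by linarith)
    have h3 : 0 < d*(2*C+4) := mul_pos hdpos (by linarith)
    linarith [h, h2, h3, hdD]
  -- finish
  have he0 : Real.exp (η * L0) = u₀⁻¹ := by
    rw [hu0def, Real.exp_neg, inv_inv]
  have he1 : Real.exp (η * L1) = v₀⁻¹ := by
    rw [hv0def, Real.exp_neg, inv_inv]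
  have hgu : u * u₀⁻¹ = 1 + A := by
    rw [hAu, mul_right_comm, mul_inv_cancel₀ hu0pos.ne', one_mul]
  have hgv : v * v₀⁻¹ = 1 + B := by
    rw [hBv, mul_right_comm, mul_inv_cancel₀ hv0pos.ne', one_mul]
  calc (1 - p) * (u * Real.exp (η * L0)) + p * (v * Real.exp (η * L1))
      = (1-p) * (1 + A) + p * (1 + B) := by rw [he0, he1, hgu, hgv]
    _ = 1 + D := by rw [hDdef]; ring
    _ ≤ 1 := by linarith
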